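/- For t ≥ 1, the identity h_t = ∑_{ε ∈ {0,1}^{t-1}} [ q₁^{∑_{s: ε_s = 0} s} / ((q₁-1)(q₁²-1)⋯(q₁^t-1)) ] · s'_ε holds in the ring of symmetric functions over ℚ(q₁), where s'_ε are ribbon skew Schur functions in the plethystically modified power sums p'_t = (q₁^t - 1)p_t and h_t is the usual complete homogeneous symmetric function. -/

import Mathlib

/- STATEMENT 19: in Λ = ℚ(q₁)[p₁,p₂,…], with h_t defined by
1 + ∑ h_t x^{-t} = exp(∑ p_t/(t xᵗ)), p'_t = (q₁ᵗ-1)p_t, h'_t defined by the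
same generating identity from the p'_t, and s'_ε (ε a binary string) the ribbon
skew Schur functions of the plethysm, determined by s'_{(0^{t-1})} = h'_t and
s'_ε s'_{ε'} = s'_{ε0ε'} + s'_{ε1ε'}, one has for all t ≥ 1:
  h_t = ∑_{ε ∈ {0,1}^{t-1}} q₁^{∑_{s : ε_s = 0} s} / ((q₁-1)⋯(q₁ᵗ-1)) · s'_ε.
The generating identities are encoded via their unique characterization in
characteristic zero: constant term 1 and H' = P'·H. -/

noncomputable section

abbrev K1 : Type := FractionRing (Polynomial ℚ)

noncomputable def q₁ : K1 := algebraMap (Polynomial ℚ) K1 Polynomial.X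

abbrev Lam : Type := MvPolynomial ℕ K1

/-- the power sum p_t (t ≥ 1) -/
noncomputable def pp (t : ℕ) : Lam := MvPolynomial.X t

/-- the plethystically modified power sum p'_t = (q₁ᵗ - 1) p_t -/
noncomputable def pp' (t : ℕ) : Lam := MvPolynomial.C (q₁ ^ t - 1) * pp t

open Finset MvPolynomial

lemma coeff_derivativeFun' {R : Type*} [CommSemiring R] (f : PowerSeries R) (n : ℕ) :
    PowerSeries.coeff n f.derivativeFun = PowerSeries.coeff (n + 1) f * (n + 1) :=
  PowerSeries.coeff_derivative f n

/-- uniqueness of solutions of F' = Q·F with given constant coefficient -/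
lemma ode_uniq (Q F G : PowerSeries Lam)
    (hF : F.derivativeFun = Q * F) (hG : G.derivativeFun = Q * G)
    (h0 : PowerSeries.coeff (R := Lam) 0 F = PowerSeries.coeff (R := Lam) 0 G) : F = G := by
  refine PowerSeries.ext fun n => ?_
  induction n using Nat.strong_induction_on with
  | _ n ih =>
    match n with
    | 0 => exact h0
    | Nat.succ n =>
      have h1 : PowerSeries.coeff (R := Lam) n F.derivativeFun
          = PowerSeries.coeff (R := Lam) n G.derivativeFun := by
        rw [hF, hG, PowerSeries.coeff_mul, PowerSeries.coeff_mul]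
        refine Finset.sum_congr rfl fun p hp => ?_
        have hm := Finset.HasAntidiagonal.mem_antidiagonal.mp hp
        rw [ih p.2 (by omega)]
      rw [coeff_derivativeFun', coeff_derivativeFun'] at h1
      have hne : ((n : Lam) + 1) ≠ 0 := Nat.cast_add_one_ne_zero n
      exact mul_right_cancel₀ hne h1

/-- the key generating-function identity  q₁ⁿ hₙ = ∑ h_m h'_{n-m} -/
lemma qscale (h h' : ℕ → Lam) (hh0 : h 0 = 1) (hh'0 : h' 0 = 1)
    (hgen : PowerSeries.derivativeFun (PowerSeries.mk h) =
      (PowerSeries.mk fun t => pp (t + 1)) * PowerSeries.mk h)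
    (hgen' : PowerSeries.derivativeFun (PowerSeries.mk h') =
      (PowerSeries.mk fun t => pp' (t + 1)) * PowerSeries.mk h') :
    ∀ n : ℕ, MvPolynomial.C (q₁ ^ n) * h n
      = ∑ m ∈ Finset.range (n + 1), h m * h' (n - m) := by
  have keyF : ∀ n : ℕ, h (n + 1) * ((n : Lam) + 1)
      = ∑ p ∈ Finset.HasAntidiagonal.antidiagonal n, pp (p.1 + 1) * h p.2 := by
    intro n
    have := congrArg (PowerSeries.coeff (R := Lam) n) hgen
    rw [coeff_derivativeFun', PowerSeries.coeff_mul] at this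
    simpa using this
  have hF : (PowerSeries.mk fun n => MvPolynomial.C (q₁ ^ n) * h n).derivativeFun
      = (PowerSeries.mk fun k => MvPolynomial.C (q₁ ^ (k + 1)) * pp (k + 1))
        * PowerSeries.mk fun n => MvPolynomial.C (q₁ ^ n) * h n := by
    refine PowerSeries.ext fun n => ?_
    rw [coeff_derivativeFun', PowerSeries.coeff_mul]
    simp only [PowerSeries.coeff_mk]
    calc MvPolynomial.C (q₁ ^ (n + 1)) * h (n + 1) * ((n : Lam) + 1)
        = MvPolynomial.C (q₁ ^ (n + 1)) * (h (n + 1) * ((n : Lam) + 1)) := by ring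
      _ = MvPolynomial.C (q₁ ^ (n + 1))
          * ∑ p ∈ Finset.HasAntidiagonal.antidiagonal n, pp (p.1 + 1) * h p.2 := by rw [keyF]
      _ = ∑ p ∈ Finset.HasAntidiagonal.antidiagonal n,
            (MvPolynomial.C (q₁ ^ (p.1 + 1)) * pp (p.1 + 1))
            * (MvPolynomial.C (q₁ ^ p.2) * h p.2) := by
          rw [Finset.mul_sum]
          refine Finset.sum_congr rfl fun p hp => ?_
          have hm := Finset.HasAntidiagonal.mem_antidiagonal.mp hp
          rw [show n + 1 = (p.1 + 1) + p.2 by omega, pow_add, map_mul]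
          ring
  have hG : ((PowerSeries.mk h) * (PowerSeries.mk h')).derivativeFun
      = (PowerSeries.mk fun k => MvPolynomial.C (q₁ ^ (k + 1)) * pp (k + 1))
        * ((PowerSeries.mk h) * (PowerSeries.mk h')) := by
    rw [PowerSeries.derivativeFun_mul, hgen, hgen', smul_eq_mul, smul_eq_mul]
    have hQ : (PowerSeries.mk fun k => MvPolynomial.C (q₁ ^ (k + 1)) * pp (k + 1))
        = (PowerSeries.mk fun t => pp (t + 1)) + (PowerSeries.mk fun t => pp' (t + 1)) := by
      refine PowerSeries.ext fun n => ?_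
      rw [map_add]
      simp only [PowerSeries.coeff_mk, pp']
      rw [map_sub, map_one]
      ring
    rw [hQ]; ring
  have h0 : PowerSeries.coeff (R := Lam) 0 (PowerSeries.mk fun n => MvPolynomial.C (q₁ ^ n) * h n)
      = PowerSeries.coeff (R := Lam) 0 ((PowerSeries.mk h) * (PowerSeries.mk h')) := by
    simp [PowerSeries.coeff_mul, hh0, hh'0]
  have hFG := ode_uniq _ _ _ hF hG h0
  intro n
  have := congrArg (PowerSeries.coeff (R := Lam) n) hFG
  rw [PowerSeries.coeff_mk, PowerSeries.coeff_mul,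
    Finset.Nat.sum_antidiagonal_eq_sum_range_succ_mk] at this
  simpa using this

/-- reindexing a sum over binary strings of length t+1 by splitting the last entry -/
lemma sum_snoc {M : Type*} [AddCommMonoid M] (t : ℕ) (f : (Fin (t + 1) → Bool) → M) :
    ∑ ε : Fin (t + 1) → Bool, f ε
      = ∑ δ : Fin t → Bool, (f (Fin.snoc δ true) + f (Fin.snoc δ false)) := by
  rw [← Fintype.sum_equiv (Fin.snocEquiv (fun _ => Bool))
    (fun p => f (Fin.snoc p.2 p.1)) f (fun p => rfl)]
  rw [Fintype.sum_prod_type, Fintype.sum_bool]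
  rw [← Finset.sum_add_distrib]

lemma ofFn_snoc' {α : Type*} (t : ℕ) (δ : Fin t → α) (b : α) :
    List.ofFn (Fin.snoc δ b : Fin (t + 1) → α) = List.ofFn δ ++ [b] := by
  rw [List.ofFn_succ', List.concat_eq_append]
  simp

/-- the main inductive computation -/
lemma ribbon_sum (h h' : ℕ → Lam) (hh0 : h 0 = 1) (hh'0 : h' 0 = 1)
    (S : List Bool → Lam)
    (hS0 : ∀ t : ℕ, S (List.replicate t false) = h' (t + 1))
    (hSrule : ∀ ε ε' : List Bool,
      S ε * S ε' = S (ε ++ [false] ++ ε') + S (ε ++ [true] ++ ε'))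
    (hq : ∀ n : ℕ, MvPolynomial.C (q₁ ^ n) * h n
      = ∑ m ∈ Finset.range (n + 1), h m * h' (n - m)) :
    ∀ t k : ℕ,
      (∑ ε : Fin t → Bool,
        MvPolynomial.C
          (q₁ ^ (∑ s ∈ Finset.univ.filter (fun s : Fin t => ε s = false), ((s : ℕ) + 1)))
          * S (List.ofFn ε ++ List.replicate k false))
      = MvPolynomial.C (∏ j ∈ Finset.Icc 1 t, (q₁ ^ j - 1))
          * ∑ m ∈ Finset.range (t + 1), h m * h' (t + k + 1 - m) := by
  intro t
  induction t with
  | zero =>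
    intro k
    rw [Fintype.sum_subsingleton _ (fun _ : Fin 0 => false)]
    simp [hS0, hh0]
  | succ t ih =>
    intro k
    have ihA := ih 0
    have ihB := ih (k + 1)
    simp only [List.replicate_zero, List.append_nil, Nat.add_zero] at ihA
    rw [sum_snoc]
    have hrep : ∀ l : List Bool,
        l ++ [false] ++ List.replicate k false = l ++ List.replicate (k + 1) false := by
      intro l
      rw [List.append_assoc, List.singleton_append, ← List.replicate_succ]
    have hW : ∀ (δ : Fin t → Bool) (b : Bool),
        (∑ s ∈ Finset.univ.filter
            (fun s : Fin (t + 1) => (Fin.snoc δ b : Fin (t + 1) → Bool) s = false),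
          ((s : ℕ) + 1))
        = (∑ s ∈ Finset.univ.filter (fun s : Fin t => δ s = false), ((s : ℕ) + 1))
          + (if b = false then t + 1 else 0) := by
      intro δ b
      rw [Finset.sum_filter, Finset.sum_filter, Fin.sum_univ_castSucc]
      simp
    have step : ∀ δ : Fin t → Bool,
        (MvPolynomial.C
          (q₁ ^ (∑ s ∈ Finset.univ.filter
              (fun s : Fin (t + 1) => (Fin.snoc δ true : Fin (t + 1) → Bool) s = false),
            ((s : ℕ) + 1)))
          * S (List.ofFn (Fin.snoc δ true : Fin (t + 1) → Bool) ++ List.replicate k false))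
        + (MvPolynomial.C
          (q₁ ^ (∑ s ∈ Finset.univ.filter
              (fun s : Fin (t + 1) => (Fin.snoc δ false : Fin (t + 1) → Bool) s = false),
            ((s : ℕ) + 1)))
          * S (List.ofFn (Fin.snoc δ false : Fin (t + 1) → Bool) ++ List.replicate k false))
        = (MvPolynomial.C
            (q₁ ^ (∑ s ∈ Finset.univ.filter (fun s : Fin t => δ s = false), ((s : ℕ) + 1)))
            * S (List.ofFn δ)) * h' (k + 1)
          + (MvPolynomial.C (q₁ ^ (t + 1)) - 1)
            * (MvPolynomial.C
                (q₁ ^ (∑ s ∈ Finset.univ.filter (fun s : Fin t => δ s = false), ((s : ℕ) + 1)))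
              * S (List.ofFn δ ++ List.replicate (k + 1) false)) := by
      intro δ
      have hStrue : S (List.ofFn δ ++ [true] ++ List.replicate k false)
          = S (List.ofFn δ) * h' (k + 1)
            - S (List.ofFn δ ++ List.replicate (k + 1) false) := by
        have := hSrule (List.ofFn δ) (List.replicate k false)
        rw [hS0, hrep] at this
        linear_combination -this
      rw [hW, hW, ofFn_snoc', ofFn_snoc']
      rw [if_neg (by simp), if_pos rfl]
      rw [hStrue, hrep]
      rw [Nat.add_zero, pow_add, map_mul]
      ring
    rw [Finset.sum_congr rfl (fun δ _ => step δ)]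
    rw [Finset.sum_add_distrib, ← Finset.sum_mul, ← Finset.mul_sum]
    rw [ihA, ihB]
    -- now use hq at n = t+1 to rewrite the first factor
    have hq1 : (∑ m ∈ Finset.range (t + 1), h m * h' (t + 1 - m))
        = (MvPolynomial.C (q₁ ^ (t + 1)) - 1) * h (t + 1) := by
      have := hq (t + 1)
      rw [Finset.sum_range_succ] at this
      rw [Nat.sub_self, hh'0, mul_one] at this
      linear_combination -this
    rw [hq1]
    rw [Finset.prod_Icc_succ_top (by omega : 1 ≤ t + 1)]
    rw [Finset.sum_range_succ (f := fun m => h m * h' (t + 1 + k + 1 - m)) (n := t + 1)]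
    have harith : ∀ m ∈ Finset.range (t + 1), h m * h' (t + 1 + k + 1 - m)
        = h m * h' (t + (k + 1) + 1 - m) := by
      intro m hm
      congr 2
      omega
    rw [Finset.sum_congr rfl harith]
    rw [show t + 1 + k + 1 - (t + 1) = k + 1 by omega]
    rw [map_mul, map_sub, map_one]
    ring

theorem statement19
    (h h' : ℕ → Lam) (hh0 : h 0 = 1) (hh'0 : h' 0 = 1)
    (hgen : PowerSeries.derivativeFun (PowerSeries.mk h) =
      (PowerSeries.mk fun t => pp (t + 1)) * PowerSeries.mk h)
    (hgen' : PowerSeries.derivativeFun (PowerSeries.mk h') =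
      (PowerSeries.mk fun t => pp' (t + 1)) * PowerSeries.mk h')
    (S : List Bool → Lam)
    (hS0 : ∀ t : ℕ, S (List.replicate t false) = h' (t + 1))
    (hSrule : ∀ ε ε' : List Bool,
      S ε * S ε' = S (ε ++ [false] ++ ε') + S (ε ++ [true] ++ ε')) :
    ∀ t : ℕ, 1 ≤ t →
      h t = ∑ ε : Fin (t - 1) → Bool,
        MvPolynomial.C
          ((q₁ ^ (∑ s ∈ Finset.univ.filter (fun s : Fin (t-1) => ε s = false), ((s : ℕ) + 1))) /
            (∏ j ∈ Finset.Icc 1 t, (q₁ ^ j - 1)))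
          * S (List.ofFn ε) := by
  intro t ht
  obtain ⟨n, rfl⟩ : ∃ n, t = n + 1 := ⟨t - 1, by omega⟩
  show h (n + 1) = ∑ ε : Fin n → Bool,
    MvPolynomial.C
      ((q₁ ^ (∑ s ∈ Finset.univ.filter (fun s : Fin n => ε s = false), ((s : ℕ) + 1))) /
        (∏ j ∈ Finset.Icc 1 (n + 1), (q₁ ^ j - 1)))
      * S (List.ofFn ε)
  have hq := qscale h h' hh0 hh'0 hgen hgen'
  have hD : (∏ j ∈ Finset.Icc 1 (n + 1), (q₁ ^ j - 1)) ≠ 0 := by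
    apply Finset.prod_ne_zero_iff.mpr
    intro j hj
    have hj1 : 1 ≤ j := (Finset.mem_Icc.mp hj).1
    refine sub_ne_zero.mpr fun hq1 => ?_
    have hX : (Polynomial.X : Polynomial ℚ) ^ j = 1 := by
      apply IsFractionRing.injective (Polynomial ℚ) K1
      rw [map_pow, map_one]
      exact hq1
    have := congrArg Polynomial.natDegree hX
    rw [Polynomial.natDegree_X_pow, Polynomial.natDegree_one] at this
    omega
  have key := ribbon_sum h h' hh0 hh'0 S hS0 hSrule hq n 0
  simp only [List.replicate_zero, List.append_nil, Nat.add_zero] at key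
  have hq1 : (∑ m ∈ Finset.range (n + 1), h m * h' (n + 1 - m))
      = (MvPolynomial.C (q₁ ^ (n + 1)) - 1) * h (n + 1) := by
    have := hq (n + 1)
    rw [Finset.sum_range_succ] at this
    rw [Nat.sub_self, hh'0, mul_one] at this
    linear_combination -this
  rw [hq1] at key
  have key2 : (∑ ε : Fin n → Bool,
      MvPolynomial.C
        (q₁ ^ (∑ s ∈ Finset.univ.filter (fun s : Fin n => ε s = false), ((s : ℕ) + 1)))
        * S (List.ofFn ε))
      = MvPolynomial.C (∏ j ∈ Finset.Icc 1 (n + 1), (q₁ ^ j - 1)) * h (n + 1) := by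
    rw [key, Finset.prod_Icc_succ_top (by omega : 1 ≤ n + 1), map_mul, map_sub, map_one]
    ring
  symm
  calc (∑ ε : Fin n → Bool,
      MvPolynomial.C
        ((q₁ ^ (∑ s ∈ Finset.univ.filter (fun s : Fin n => ε s = false), ((s : ℕ) + 1))) /
          (∏ j ∈ Finset.Icc 1 (n + 1), (q₁ ^ j - 1)))
        * S (List.ofFn ε))
      = MvPolynomial.C (∏ j ∈ Finset.Icc 1 (n + 1), (q₁ ^ j - 1))⁻¹
        * ∑ ε : Fin n → Bool,
          MvPolynomial.C
            (q₁ ^ (∑ s ∈ Finset.univ.filter (fun s : Fin n => ε s = false), ((s : ℕ) + 1)))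
            * S (List.ofFn ε) := by
        rw [Finset.mul_sum]
        refine Finset.sum_congr rfl fun ε _ => ?_
        rw [div_eq_mul_inv, map_mul]
        ring
    _ = h (n + 1) := by
        rw [key2, ← mul_assoc, ← map_mul, inv_mul_cancel₀ hD, map_one, one_mul]

end
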